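/- Let $A, B, X \in \mathbb{M}_n$ be such that the block matrix $M = \begin{bmatrix} A & X \\ X^* & B \end{bmatrix} \in \mathbb{M}_{2n}$ is positive semi-definite, and let $1 \le p < \infty$. Then $\| M \|_p \le 2^{1 - 1/p} \left( \| A \|_p^p + \| B \|_p^p \right)^{1/p}$, where $\|\cdot\|_p$ denotes the Schatten $p$-norm. -/

import Mathlib

open Matrix
open scoped ComplexOrder

/-- The absolute value `|Z| = (Zᴴ Z)^(1/2)` of a square complex matrix. -/
noncomputable def matAbs {m : Type*} [Fintype m] [DecidableEq m]
    (Z : Matrix m m ℂ) : Matrix m m ℂ :=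
  (Matrix.posSemidef_conjTranspose_mul_self Z).1.eigenvectorUnitary.1 *
    Matrix.diagonal (((↑) : ℝ → ℂ) ∘ (Real.sqrt ·) ∘ (Matrix.posSemidef_conjTranspose_mul_self Z).1.eigenvalues) *
    (star (Matrix.posSemidef_conjTranspose_mul_self Z).1.eigenvectorUnitary : Matrix m m ℂ)

/-- Functional calculus: apply `f : ℝ → ℝ` to the eigenvalues of a Hermitian matrix
(junk value `0` if the matrix is not Hermitian). -/
noncomputable def hermApply {m : Type*} [Fintype m] [DecidableEq m]
    (f : ℝ → ℝ) (S : Matrix m m ℂ) : Matrix m m ℂ :=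
  if hS : S.IsHermitian then
    (hS.eigenvectorUnitary : Matrix m m ℂ) *
      Matrix.diagonal (fun i => (f (hS.eigenvalues i) : ℂ)) *
      (star (hS.eigenvectorUnitary : Matrix m m ℂ))
  else 0

/-- Real power of a positive semi-definite matrix by functional calculus. -/
noncomputable def matPow {m : Type*} [Fintype m] [DecidableEq m]
    (S : Matrix m m ℂ) (p : ℝ) : Matrix m m ℂ :=
  hermApply (fun x => x ^ p) S

/-- A symmetric (unitarily invariant) norm on complex `m × m` matrices. -/
structure IsSymmetricNorm {m : Type*} [Fintype m] [DecidableEq m]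
    (N : Matrix m m ℂ → ℝ) : Prop where
  add_le : ∀ A B, N (A + B) ≤ N A + N B
  smul : ∀ (c : ℂ) (A), N (c • A) = ‖c‖ * N A
  eq_zero_of : ∀ A, N A = 0 → A = 0
  unitary_mul_left : ∀ (U : Matrix.unitaryGroup m ℂ) (A), N (U * A) = N A
  mul_unitary_right : ∀ (U : Matrix.unitaryGroup m ℂ) (A), N (A * U) = N A

/-- Eigenvalues of a Hermitian matrix (junk value `0` if not Hermitian). -/
noncomputable def eigVals {m : Type*} [Fintype m] [DecidableEq m]
    (Z : Matrix m m ℂ) : m → ℝ :=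
  if hZ : Z.IsHermitian then hZ.eigenvalues else 0

/-- Eigenvalues of a Hermitian `n × n` matrix listed in decreasing order. -/
noncomputable def eigDown {n : ℕ} (Z : Matrix (Fin n) (Fin n) ℂ) : Fin n → ℝ :=
  fun i => (eigVals Z ∘ Tuple.sort (eigVals Z)) i.rev

/-- `Z ^ ↓`: the diagonal matrix listing the eigenvalues of `Z` in decreasing order. -/
noncomputable def downMat {n : ℕ} (Z : Matrix (Fin n) (Fin n) ℂ) : Matrix (Fin n) (Fin n) ℂ :=
  Matrix.diagonal (fun i => (eigDown Z i : ℂ))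

/-- Schatten `p`-norm. -/
noncomputable def schattenNorm {m : Type*} [Fintype m] [DecidableEq m]
    (p : ℝ) (Z : Matrix m m ℂ) : ℝ :=
  (∑ i, eigVals (matAbs Z) i ^ p) ^ (1 / p)

/-- Operator norm (largest singular value). -/
noncomputable def opNormInf {m : Type*} [Fintype m] [DecidableEq m]
    (Z : Matrix m m ℂ) : ℝ :=
  ⨆ i, Real.sqrt (eigVals (Zᴴ * Z) i)

/-- Numerical range. -/
def numRange {m : Type*} [Fintype m] (X : Matrix m m ℂ) : Set ℂ :=
  {z | ∃ x : m → ℂ, ∑ i, ‖x i‖ ^ 2 = 1 ∧ dotProduct (star x) (X *ᵥ x) = z}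

/-- Numerical radius. -/
noncomputable def numRadius {m : Type*} [Fintype m] (X : Matrix m m ℂ) : ℝ :=
  sSup ((‖·‖) '' numRange X)
namespace SchattenAux

open Polynomial

variable {m : Type*} [Fintype m] [DecidableEq m]

lemma charpoly_conj (P Pi S : Matrix m m ℂ) (h1 : P * Pi = 1) (h2 : Pi * P = 1) :
    (P * S * Pi).charpoly = S.charpoly := by
  classical
  set φ : Matrix m m ℂ →+* Matrix m m (Polynomial ℂ) := (Polynomial.C (R := ℂ)).mapMatrix with hφ
  have key : charmatrix (P * S * Pi) = φ P * charmatrix S * φ Pi := by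
    have hsc : ∀ A : Matrix m m (Polynomial ℂ),
        A * Matrix.scalar m (X : Polynomial ℂ) = Matrix.scalar m (X : Polynomial ℂ) * A :=
      fun A => (Matrix.scalar_commute (X : Polynomial ℂ) (fun r => Commute.all _ _) A).symm
    have e1 : φ P * Matrix.scalar m (X : Polynomial ℂ) * φ Pi = Matrix.scalar m (X : Polynomial ℂ) := by
      rw [hsc (φ P), mul_assoc, ← _root_.map_mul φ, h1, _root_.map_one φ, mul_one]
    calc charmatrix (P * S * Pi)
        = Matrix.scalar m (X : Polynomial ℂ) - φ (P * S * Pi) := rfl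
      _ = φ P * Matrix.scalar m (X : Polynomial ℂ) * φ Pi - φ P * φ S * φ Pi := by
          rw [e1, _root_.map_mul φ, _root_.map_mul φ]
      _ = φ P * charmatrix S * φ Pi := by
          rw [charmatrix, Matrix.mul_sub, Matrix.sub_mul]
  simp only [Matrix.charpoly]
  rw [key, det_mul, det_mul, mul_right_comm, ← det_mul, ← _root_.map_mul φ, h1, _root_.map_one φ, det_one, one_mul]

lemma charpoly_mul_comm (A B : Matrix m m ℂ) : (A * B).charpoly = (B * A).charpoly := by
  classical
  have h1 : (fromBlocks 1 A 0 1 : Matrix (m ⊕ m) (m ⊕ m) ℂ) * fromBlocks 1 (-A) 0 1 = 1 := by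
    simp [Matrix.fromBlocks_multiply, Matrix.fromBlocks_one]
  have h2 : (fromBlocks 1 (-A) 0 1 : Matrix (m ⊕ m) (m ⊕ m) ℂ) * fromBlocks 1 A 0 1 = 1 := by
    simp [Matrix.fromBlocks_multiply, Matrix.fromBlocks_one]
  have key : (fromBlocks 1 A 0 1 : Matrix (m ⊕ m) (m ⊕ m) ℂ) * (fromBlocks 0 0 B (B * A)) *
      (fromBlocks 1 (-A) 0 1) = fromBlocks (A * B) 0 B 0 := by
    simp [Matrix.fromBlocks_multiply, Matrix.mul_assoc]
  have e := charpoly_conj _ _ (fromBlocks 0 0 B (B * A)) h1 h2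
  rw [key] at e
  rw [Matrix.charpoly_fromBlocks_zero₁₂, Matrix.charpoly_fromBlocks_zero₁₂] at e
  have h0 : ((0 : Matrix m m ℂ)).charpoly ≠ 0 := (Matrix.charpoly_monic _).ne_zero
  apply mul_left_cancel₀ h0
  rw [mul_comm ((0 : Matrix m m ℂ).charpoly) ((A * B).charpoly), e]

lemma charpoly_diagonal (d : m → ℂ) :
    (Matrix.diagonal d).charpoly = (Finset.univ.val.map fun i => X - C (d i)).prod := by
  classical
  have h : charmatrix (Matrix.diagonal d) = Matrix.diagonal fun i => X - C (d i) := by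
    ext i j
    by_cases h : i = j
    · subst h; simp [charmatrix_apply, Matrix.diagonal_apply]
    · simp [charmatrix_apply, Matrix.diagonal_apply, h]
  simp only [Matrix.charpoly, h, det_diagonal]
  rw [Finset.prod_eq_multiset_prod]

lemma roots_charpoly_herm (S : Matrix m m ℂ) (hS : S.IsHermitian) :
    S.charpoly.roots = Finset.univ.val.map fun i => ((hS.eigenvalues i : ℝ) : ℂ) := by
  classical
  have hc : S.charpoly
      = (Matrix.diagonal (RCLike.ofReal ∘ hS.eigenvalues) : Matrix m m ℂ).charpoly := by
    conv_lhs => rw [hS.spectral_theorem]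
    exact charpoly_conj _ _ _ ((Matrix.mem_unitaryGroup_iff).mp hS.eigenvectorUnitary.2)
      ((Matrix.mem_unitaryGroup_iff').mp hS.eigenvectorUnitary.2)
  rw [hc, charpoly_diagonal]
  have : (Finset.univ.val.map fun i => X - C ((RCLike.ofReal ∘ hS.eigenvalues) i))
      = (Finset.univ.val.map fun i => ((hS.eigenvalues i : ℝ) : ℂ)).map fun a => X - C a := by
    rw [Multiset.map_map]
    rfl
  rw [this, roots_multiset_prod_X_sub_C]

lemma sum_g_eigs (S : Matrix m m ℂ) (hS : S.IsHermitian) (g : ℝ → ℝ) :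
    (S.charpoly.roots.map fun z => g z.re).sum = ∑ i, g (hS.eigenvalues i) := by
  rw [roots_charpoly_herm S hS, Multiset.map_map]
  rw [Finset.sum_eq_multiset_sum]
  congr 1

lemma roots_charpoly_zero :
    ((0 : Matrix m m ℂ).charpoly).roots = (Fintype.card m) • ({0} : Multiset ℂ) := by
  classical
  have h0 : charmatrix (0 : Matrix m m ℂ) = Matrix.diagonal (fun _ => (X : Polynomial ℂ)) := by
    ext i j
    by_cases h : i = j <;> simp [charmatrix_apply, Matrix.diagonal_apply, h]
  have : (0 : Matrix m m ℂ).charpoly = X ^ (Fintype.card m) := by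
    simp only [Matrix.charpoly, h0, det_diagonal, Finset.prod_const, Finset.card_univ]
  rw [this, roots_pow, roots_X]


open scoped MatrixOrder in
lemma matAbs_eq {Z : Matrix m m ℂ} (hZ : Z.PosSemidef) : matAbs Z = Z := by
  have h1 : matAbs Z = cfc Real.sqrt (Zᴴ * Z) := by
    rw [(Matrix.posSemidef_conjTranspose_mul_self Z).1.cfc_eq, IsHermitian.cfc,
      Unitary.conjStarAlgAut_apply]
    rfl
  have hZZ : 0 ≤ Z * Z := by
    have := Matrix.posSemidef_conjTranspose_mul_self Z
    rw [hZ.1] at this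
    exact this.nonneg
  have h2 : CFC.sqrt (Z * Z) = cfc Real.sqrt (Z * Z) := by
    rw [CFC.sqrt_eq_real_sqrt (Z * Z) hZZ, cfcₙ_eq_cfc]
  rw [h1, hZ.1, ← h2, CFC.sqrt_mul_self Z hZ.nonneg]

open scoped MatrixOrder in
lemma exists_sqrt (M : Matrix m m ℂ) (hM : M.PosSemidef) :
    ∃ T : Matrix m m ℂ, T.PosSemidef ∧ T * T = M :=
  ⟨CFC.sqrt M, (CFC.sqrt_nonneg M).posSemidef, CFC.sqrt_mul_sqrt_self M hM.nonneg⟩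

lemma eigVals_eq {Z : Matrix m m ℂ} (hZ : Z.IsHermitian) : eigVals Z = hZ.eigenvalues := by
  unfold eigVals
  exact dif_pos hZ

lemma schattenNorm_psd {Z : Matrix m m ℂ} (hZ : Z.PosSemidef) (p : ℝ) :
    schattenNorm p Z = (∑ i, hZ.1.eigenvalues i ^ p) ^ (1 / p) := by
  unfold schattenNorm
  rw [matAbs_eq hZ, eigVals_eq hZ.1]

lemma diag_nonneg {S : Matrix m m ℂ} (hS : S.PosSemidef) (i : m) : 0 ≤ (S i i).re := by
  have h := hS.dotProduct_mulVec_nonneg (Pi.single i 1)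
  have he : dotProduct (star (Pi.single i 1)) (S *ᵥ Pi.single i 1) = S i i := by
    simp [dotProduct, Matrix.mulVec, Pi.single_apply, Finset.sum_ite_eq]
  rw [he] at h
  exact (Complex.le_def.mp h).1

lemma add_rpow_le {a b : ℝ} (ha : 0 ≤ a) (hb : 0 ≤ b) {p : ℝ} (hp : 1 ≤ p) :
    (a + b) ^ p ≤ (2 : ℝ) ^ (p - 1) * (a ^ p + b ^ p) := by
  lift a to NNReal using ha
  lift b to NNReal using hb
  have h := NNReal.rpow_add_le_mul_rpow_add_rpow a b hp
  exact_mod_cast h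

lemma peierls (S : Matrix m m ℂ) (hS : S.PosSemidef) (W : Matrix m m ℂ)
    (hW : W ∈ Matrix.unitaryGroup m ℂ) {p : ℝ} (hp : 1 ≤ p) :
    ∑ i, ((star W * S * W) i i).re ^ p ≤ ∑ i, hS.1.eigenvalues i ^ p := by
  classical
  set U : Matrix m m ℂ := (hS.1.eigenvectorUnitary : Matrix m m ℂ) with hU
  set V : Matrix m m ℂ := star U * W with hV
  have hUm : U ∈ Matrix.unitaryGroup m ℂ := hS.1.eigenvectorUnitary.2
  have hVsV : star V * V = 1 := by
    rw [hV, StarMul.star_mul, star_star]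
    calc star W * U * (star U * W) = star W * (U * star U) * W := by noncomm_ring
      _ = 1 := by
        rw [Matrix.mem_unitaryGroup_iff.mp hUm, mul_one, Matrix.mem_unitaryGroup_iff'.mp hW]
  have hVVs : V * star V = 1 := by
    rw [hV, StarMul.star_mul, star_star]
    calc star U * W * (star W * U) = star U * (W * star W) * U := by noncomm_ring
      _ = 1 := by
        rw [Matrix.mem_unitaryGroup_iff.mp hW, mul_one, Matrix.mem_unitaryGroup_iff'.mp hUm]
  set lam := hS.1.eigenvalues with hlam
  set w : m → m → ℝ := fun i j => Complex.normSq (V j i) with hw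
  have hWSW : star W * S * W = star V * Matrix.diagonal (RCLike.ofReal ∘ lam) * V := by
    conv_lhs => rw [hS.1.spectral_theorem, Unitary.conjStarAlgAut_apply]
    rw [hV, StarMul.star_mul, star_star]
    simp only [Matrix.mul_assoc]
    rfl
  have hterm : ∀ i j, (star V) i j * ((Matrix.diagonal (RCLike.ofReal ∘ lam)) j j) * V j i
      = ((w i j * lam j : ℝ) : ℂ) := by
    intro i j
    rw [Matrix.star_apply, Matrix.diagonal_apply_eq]
    simp only [Function.comp_apply, RCLike.ofReal_alg, hw]
    push_cast
    rw [Complex.star_def]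
    calc (starRingEnd ℂ) (V j i) * ((lam j : ℂ) • 1) * V j i
        = ((V j i) * (starRingEnd ℂ) (V j i)) * (lam j : ℂ) := by
          rw [smul_eq_mul]; ring
      _ = _ := by rw [Complex.mul_conj]
  have hent : ∀ i, ((star W * S * W) i i) = ((∑ j, w i j * lam j : ℝ) : ℂ) := by
    intro i
    rw [hWSW]
    rw [Matrix.mul_apply]
    push_cast
    refine Finset.sum_congr rfl fun j _ => ?_
    rw [Matrix.mul_diagonal]
    have := hterm i j
    rw [Matrix.diagonal_apply_eq] at this
    rw [this]
    push_cast
    ring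
  have hrow : ∀ i, ∑ j, w i j = 1 := by
    intro i
    have h1 : (star V * V) i i = 1 := by rw [hVsV, Matrix.one_apply_eq]
    rw [Matrix.mul_apply] at h1
    have h2 : ∀ j, (star V) i j * V j i = ((w i j : ℝ) : ℂ) := by
      intro j
      rw [Matrix.star_apply, hw, Complex.star_def, mul_comm, Complex.mul_conj]
    rw [Finset.sum_congr rfl fun j _ => h2 j] at h1
    exact_mod_cast h1
  have hcol : ∀ j, ∑ i, w i j = 1 := by
    intro j
    have h1 : (V * star V) j j = 1 := by rw [hVVs, Matrix.one_apply_eq]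
    rw [Matrix.mul_apply] at h1
    have h2 : ∀ i, V j i * (star V) i j = ((w i j : ℝ) : ℂ) := by
      intro i
      rw [Matrix.star_apply, hw, Complex.star_def, Complex.mul_conj]
    rw [Finset.sum_congr rfl fun i _ => h2 i] at h1
    exact_mod_cast h1
  have hjen : ∀ i, (∑ j, w i j * lam j) ^ p ≤ ∑ j, w i j * lam j ^ p := fun i =>
    Real.rpow_arith_mean_le_arith_mean_rpow Finset.univ _ _
      (fun j _ => Complex.normSq_nonneg _) (hrow i)
      (fun j _ => hS.eigenvalues_nonneg j) hp
  calc ∑ i, ((star W * S * W) i i).re ^ p = ∑ i, (∑ j, w i j * lam j) ^ p := by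
        refine Finset.sum_congr rfl fun i _ => ?_
        rw [hent i, Complex.ofReal_re]
    _ ≤ ∑ i, ∑ j, w i j * lam j ^ p := Finset.sum_le_sum fun i _ => hjen i
    _ = ∑ j, (∑ i, w i j) * lam j ^ p := by
        rw [Finset.sum_comm]
        exact Finset.sum_congr rfl fun j _ => (Finset.sum_mul _ _ _).symm
    _ = ∑ j, lam j ^ p := by
        refine Finset.sum_congr rfl fun j _ => ?_
        rw [hcol j, one_mul]

end SchattenAux


theorem schatten_norm_bound {n : ℕ} (A B X : Matrix (Fin n) (Fin n) ℂ)
    (hM : (Matrix.fromBlocks A X Xᴴ B).PosSemidef)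
    (p : ℝ) (hp : 1 ≤ p) :
    schattenNorm p (Matrix.fromBlocks A X Xᴴ B) ≤
      (2 : ℝ) ^ (1 - 1 / p) * (schattenNorm p A ^ p + schattenNorm p B ^ p) ^ (1 / p) := by
  classical
  have hp0 : (0:ℝ) < p := lt_of_lt_of_le one_pos hp
  have hpne : p ≠ 0 := ne_of_gt hp0
  set M : Matrix (Fin n ⊕ Fin n) (Fin n ⊕ Fin n) ℂ := Matrix.fromBlocks A X Xᴴ B with hMdef
  have hA : A.PosSemidef := by
    have h := hM.submatrix Sum.inl
    have he : M.submatrix Sum.inl Sum.inl = A := by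
      rw [hMdef]; ext i j; rfl
    rwa [he] at h
  have hB : B.PosSemidef := by
    have h := hM.submatrix Sum.inr
    have he : M.submatrix Sum.inr Sum.inr = B := by
      rw [hMdef]; ext i j; rfl
    rwa [he] at h
  obtain ⟨T, hT, hTT⟩ := SchattenAux.exists_sqrt M hM
  set E1 : Matrix (Fin n ⊕ Fin n) (Fin n ⊕ Fin n) ℂ := Matrix.fromBlocks 1 0 0 0 with hE1
  set E2 : Matrix (Fin n ⊕ Fin n) (Fin n ⊕ Fin n) ℂ := Matrix.fromBlocks 0 0 0 1 with hE2
  set P := T * E1 * T with hPdef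
  set Q := T * E2 * T with hQdef
  have hE12 : E1 + E2 = 1 := by
    rw [hE1, hE2, Matrix.fromBlocks_add]
    simp [Matrix.fromBlocks_one]
  have hPQ : P + Q = M := by
    rw [hPdef, hQdef]
    have h : T * E1 * T + T * E2 * T = T * (E1 + E2) * T := by noncomm_ring
    rw [h, hE12, mul_one, hTT]
  have hE1H : E1ᴴ = E1 := by rw [hE1, Matrix.fromBlocks_conjTranspose]; simp
  have hE2H : E2ᴴ = E2 := by rw [hE2, Matrix.fromBlocks_conjTranspose]; simp
  have hE1sq : E1 * E1 = E1 := by rw [hE1, Matrix.fromBlocks_multiply]; simp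
  have hE2sq : E2 * E2 = E2 := by rw [hE2, Matrix.fromBlocks_multiply]; simp
  have hP : P.PosSemidef := by
    have he : (E1 * T)ᴴ * (E1 * T) = P := by
      rw [Matrix.conjTranspose_mul, hE1H, hT.1, hPdef]
      have h : T * E1 * (E1 * T) = T * (E1 * E1) * T := by noncomm_ring
      rw [h, hE1sq]
    exact he ▸ Matrix.posSemidef_conjTranspose_mul_self (E1 * T)
  have hQ : Q.PosSemidef := by
    have he : (E2 * T)ᴴ * (E2 * T) = Q := by
      rw [Matrix.conjTranspose_mul, hE2H, hT.1, hQdef]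
      have h : T * E2 * (E2 * T) = T * (E2 * E2) * T := by noncomm_ring
      rw [h, hE2sq]
    exact he ▸ Matrix.posSemidef_conjTranspose_mul_self (E2 * T)
  have hcP : P.charpoly = A.charpoly * (0 : Matrix (Fin n) (Fin n) ℂ).charpoly := by
    have h1 : P = T * (E1 * T) := by rw [hPdef, Matrix.mul_assoc]
    have h2 : (E1 * T) * T = E1 * M := by rw [Matrix.mul_assoc, hTT]
    rw [h1, SchattenAux.charpoly_mul_comm, h2]
    have h3 : E1 * M = Matrix.fromBlocks A X 0 0 := by
      rw [hE1, hMdef, Matrix.fromBlocks_multiply]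
      simp
    rw [h3, Matrix.charpoly_fromBlocks_zero₂₁]
  have hcQ : Q.charpoly = (0 : Matrix (Fin n) (Fin n) ℂ).charpoly * B.charpoly := by
    have h1 : Q = T * (E2 * T) := by rw [hQdef, Matrix.mul_assoc]
    have h2 : (E2 * T) * T = E2 * M := by rw [Matrix.mul_assoc, hTT]
    rw [h1, SchattenAux.charpoly_mul_comm, h2]
    have h3 : E2 * M = Matrix.fromBlocks 0 0 Xᴴ B := by
      rw [hE2, hMdef, Matrix.fromBlocks_multiply]
      simp
    rw [h3, Matrix.charpoly_fromBlocks_zero₁₂]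
  have hzero : (((0 : Matrix (Fin n) (Fin n) ℂ).charpoly.roots).map
      fun z => (fun t : ℝ => t ^ p) z.re).sum = 0 := by
    rw [SchattenAux.roots_charpoly_zero]
    simp [Multiset.nsmul_singleton, Multiset.map_replicate, Multiset.sum_replicate,
      Real.zero_rpow hpne]
  have hroots_mul : ∀ (f g : Polynomial ℂ), f.Monic → g.Monic →
      (f * g).roots = f.roots + g.roots := fun f g hf hg =>
    Polynomial.roots_mul (mul_ne_zero hf.ne_zero hg.ne_zero)
  have hsumP : ∑ i, hP.1.eigenvalues i ^ p = ∑ i, hA.1.eigenvalues i ^ p := by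
    rw [← SchattenAux.sum_g_eigs P hP.1 (fun t => t ^ p),
      ← SchattenAux.sum_g_eigs A hA.1 (fun t => t ^ p)]
    rw [hcP, hroots_mul _ _ (Matrix.charpoly_monic _) (Matrix.charpoly_monic _),
      Multiset.map_add, Multiset.sum_add, hzero, add_zero]
  have hsumQ : ∑ i, hQ.1.eigenvalues i ^ p = ∑ i, hB.1.eigenvalues i ^ p := by
    rw [← SchattenAux.sum_g_eigs Q hQ.1 (fun t => t ^ p),
      ← SchattenAux.sum_g_eigs B hB.1 (fun t => t ^ p)]
    rw [hcQ, hroots_mul _ _ (Matrix.charpoly_monic _) (Matrix.charpoly_monic _),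
      Multiset.map_add, Multiset.sum_add, hzero, zero_add]
  set W : Matrix (Fin n ⊕ Fin n) (Fin n ⊕ Fin n) ℂ := ((hM.1.eigenvectorUnitary : Matrix.unitaryGroup (Fin n ⊕ Fin n) ℂ) : Matrix (Fin n ⊕ Fin n) (Fin n ⊕ Fin n) ℂ)
    with hWdef
  have hWmem : W ∈ Matrix.unitaryGroup (Fin n ⊕ Fin n) ℂ := hM.1.eigenvectorUnitary.2
  have hdiag : star W * M * W = Matrix.diagonal (RCLike.ofReal ∘ hM.1.eigenvalues) := by
    have := hM.1.conjStarAlgAut_star_eigenvectorUnitary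
    simpa [Unitary.conjStarAlgAut_apply, hWdef] using this
  have hlam : ∀ i, hM.1.eigenvalues i
      = ((star W * P * W) i i).re + ((star W * Q * W) i i).re := by
    intro i
    have hsplit : star W * M * W = star W * P * W + star W * Q * W := by
      rw [← hPQ]; noncomm_ring
    have h2 := congrArg (fun N : Matrix (Fin n ⊕ Fin n) (Fin n ⊕ Fin n) ℂ => (N i i).re) hsplit
    simp only [hdiag] at h2
    simpa [RCLike.ofReal_alg] using h2
  have hWP : (star W * P * W).PosSemidef := by
    have h := hP.conjTranspose_mul_mul_same W
    rwa [← Matrix.star_eq_conjTranspose] at h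
  have hWQ : (star W * Q * W).PosSemidef := by
    have h := hQ.conjTranspose_mul_mul_same W
    rwa [← Matrix.star_eq_conjTranspose] at h
  have haP : ∀ i, 0 ≤ ((star W * P * W) i i).re := fun i => SchattenAux.diag_nonneg hWP i
  have haQ : ∀ i, 0 ≤ ((star W * Q * W) i i).re := fun i => SchattenAux.diag_nonneg hWQ i
  have hkey : ∑ i, hM.1.eigenvalues i ^ p
      ≤ (2:ℝ) ^ (p - 1) * ((∑ i, hA.1.eigenvalues i ^ p) + ∑ i, hB.1.eigenvalues i ^ p) := by
    have step1 : ∀ i, hM.1.eigenvalues i ^ p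
        ≤ (2:ℝ) ^ (p-1) * (((star W * P * W) i i).re ^ p + ((star W * Q * W) i i).re ^ p) := by
      intro i
      rw [hlam i]
      exact SchattenAux.add_rpow_le (haP i) (haQ i) hp
    calc ∑ i, hM.1.eigenvalues i ^ p
        ≤ ∑ i, (2:ℝ) ^ (p-1) * (((star W * P * W) i i).re ^ p
          + ((star W * Q * W) i i).re ^ p) := Finset.sum_le_sum fun i _ => step1 i
      _ = (2:ℝ) ^ (p-1) * ((∑ i, ((star W * P * W) i i).re ^ p)
          + ∑ i, ((star W * Q * W) i i).re ^ p) := by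
          rw [← Finset.mul_sum, Finset.sum_add_distrib]
      _ ≤ (2:ℝ) ^ (p-1) * ((∑ i, hP.1.eigenvalues i ^ p) + ∑ i, hQ.1.eigenvalues i ^ p) := by
          refine mul_le_mul_of_nonneg_left
            (add_le_add (SchattenAux.peierls P hP W hWmem hp)
              (SchattenAux.peierls Q hQ W hWmem hp))
            (Real.rpow_nonneg (by norm_num) _)
      _ = _ := by rw [hsumP, hsumQ]
  have hSA0 : 0 ≤ ∑ i, hA.1.eigenvalues i ^ p :=
    Finset.sum_nonneg fun i _ => Real.rpow_nonneg (hA.eigenvalues_nonneg i) _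
  have hSB0 : 0 ≤ ∑ i, hB.1.eigenvalues i ^ p :=
    Finset.sum_nonneg fun i _ => Real.rpow_nonneg (hB.eigenvalues_nonneg i) _
  have hSM0 : 0 ≤ ∑ i, hM.1.eigenvalues i ^ p :=
    Finset.sum_nonneg fun i _ => Real.rpow_nonneg (hM.eigenvalues_nonneg i) _
  rw [SchattenAux.schattenNorm_psd hM p, SchattenAux.schattenNorm_psd hA p,
    SchattenAux.schattenNorm_psd hB p]
  have hpowA : ((∑ i, hA.1.eigenvalues i ^ p) ^ (1/p)) ^ p = ∑ i, hA.1.eigenvalues i ^ p := by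
    rw [← Real.rpow_mul hSA0, one_div, inv_mul_cancel₀ hpne, Real.rpow_one]
  have hpowB : ((∑ i, hB.1.eigenvalues i ^ p) ^ (1/p)) ^ p = ∑ i, hB.1.eigenvalues i ^ p := by
    rw [← Real.rpow_mul hSB0, one_div, inv_mul_cancel₀ hpne, Real.rpow_one]
  rw [hpowA, hpowB]
  have h1 : (∑ i, hM.1.eigenvalues i ^ p) ^ (1/p)
      ≤ ((2:ℝ) ^ (p-1) * ((∑ i, hA.1.eigenvalues i ^ p)
        + ∑ i, hB.1.eigenvalues i ^ p)) ^ (1/p) :=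
    Real.rpow_le_rpow hSM0 hkey (by positivity)
  have h2 : ((2:ℝ) ^ (p-1) * ((∑ i, hA.1.eigenvalues i ^ p)
        + ∑ i, hB.1.eigenvalues i ^ p)) ^ (1/p)
      = (2:ℝ) ^ (1 - 1/p) * ((∑ i, hA.1.eigenvalues i ^ p)
        + ∑ i, hB.1.eigenvalues i ^ p) ^ (1/p) := by
    rw [Real.mul_rpow (Real.rpow_nonneg (by norm_num) _) (add_nonneg hSA0 hSB0),
      ← Real.rpow_mul (by norm_num : (0:ℝ) ≤ 2)]
    rw [show (p-1) * (1/p) = 1 - 1/p by field_simp]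
  exact le_of_le_of_eq h1 h2
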